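/- arXiv:1508.07217 — 2 statements merged into one kernel-verified Lean document; each statement's English description precedes it below -/
import Mathlib

section
/- If an oriented graph G1 is obtained from an oriented graph G by pushing a set of vertices, then the anti-twinned graphs R(G) and R(G1) are isomorphic as oriented graphs. -/
/-- An oriented graph: a loopless digraph with no 2-cycles (arc relation is asymmetric). -/
structure OGraph (V : Type) where
  arc : V → V → Prop
  asymm : ∀ u v, arc u v → ¬ arc v u

namespace OGraph

/-- Pushing a set `S` of vertices reverses exactly the arcs with exactly one endpoint in `S`. -/
def push {V : Type} (G : OGraph V) (S : Set V) : OGraph V where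
  arc u v := (Xor (u ∈ S) (v ∈ S) ∧ G.arc v u) ∨ (¬ Xor (u ∈ S) (v ∈ S) ∧ G.arc u v)
  asymm := by
    intro u v h h'
    have h1 := G.asymm u v
    have h2 := G.asymm v u
    unfold Xor at h h'
    tauto

/-- Homomorphism of oriented graphs. -/
def IsHom {V W : Type} (G : OGraph V) (H : OGraph W) (f : V → W) : Prop :=
  ∀ u v, G.arc u v → H.arc (f u) (f v)

/-- Isomorphism of oriented graphs along an equivalence. -/
def IsIso {V W : Type} (G : OGraph V) (H : OGraph W) (e : V ≃ W) : Prop :=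
  ∀ u v, G.arc u v ↔ H.arc (e u) (e v)

/-- The anti-twinned graph `R(G)` on two copies of the vertices:
`inl` is the original copy, `inr` the pushed (primed) copy. -/
def antiTwin {V : Type} (G : OGraph V) : OGraph (V ⊕ V) where
  arc x y :=
    match x, y with
    | Sum.inl u, Sum.inl v => G.arc u v
    | Sum.inr u, Sum.inr v => G.arc u v
    | Sum.inl u, Sum.inr v => G.arc v u
    | Sum.inr u, Sum.inl v => G.arc v u
  asymm := by
    rintro (u | u) (v | v) h h' <;> exact G.asymm _ _ h h'

/-- The anti-twin of a vertex of `R(G)`: `x'` with `x'' = x`. -/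
def tw {V : Type} : V ⊕ V → V ⊕ V := Sum.elim Sum.inr Sum.inl

/-- `H` is an orientation of the simple graph `G`. -/
def IsOrientationOf {V : Type} (H : OGraph V) (G : SimpleGraph V) : Prop :=
  (∀ u v, H.arc u v → G.Adj u v) ∧ (∀ u v, G.Adj u v → H.arc u v ∨ H.arc v u)

end OGraph

/-- The directed 3-cycle. -/
def C3 : OGraph (Fin 3) where
  arc u v := v = u + 1
  asymm := by decide

/-- If `G₁` is obtained from `G` by pushing a set of vertices, then the
anti-twinned graphs `R(G)` and `R(G₁)` are isomorphic. -/
theorem antiTwin_iso_of_push {V : Type} (G G1 : OGraph V)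
    (h : ∃ S : Set V, G1 = G.push S) :
    ∃ e : (V ⊕ V) ≃ (V ⊕ V), OGraph.IsIso G.antiTwin G1.antiTwin e := by
  classical
  obtain ⟨S, rfl⟩ := h
  let f : V ⊕ V → V ⊕ V := fun x =>
    match x with
    | Sum.inl u => if u ∈ S then Sum.inr u else Sum.inl u
    | Sum.inr u => if u ∈ S then Sum.inl u else Sum.inr u
  have hf : ∀ x, f (f x) = x := by
    rintro (u | u) <;> simp only [f] <;> by_cases hu : u ∈ S <;> simp [hu]
  refine ⟨⟨f, f, hf, hf⟩, ?_⟩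
  rintro (u | u) (v | v) <;>
    simp only [Equiv.coe_fn_mk, f] <;>
    by_cases hu : u ∈ S <;> by_cases hv : v ∈ S <;>
    simp only [hu, hv, if_true, if_false, OGraph.antiTwin, OGraph.push, Xor] <;>
    constructor <;> intro hh <;> tauto
end

section
/- Let S = R(T) be a splitable oriented graph. Then an oriented graph G admits a homomorphism to S if and only if the push graph [G] admits a homomorphism to T (i.e., some graph obtained from G by pushing a vertex set admits a homomorphism to T). -/
/-- For a splitable graph `S = R(T)`, an oriented graph `G` admits a
homomorphism to `S` iff the push graph `[G]` admits a homomorphism to `T` (some push of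
`G` maps homomorphically to `T`). -/
theorem hom_to_antiTwin_iff_push_hom {U V : Type} (G : OGraph U) (T : OGraph V) :
    (∃ f : U → V ⊕ V, OGraph.IsHom G T.antiTwin f) ↔
    (∃ (S : Set U) (f : U → V), OGraph.IsHom (G.push S) T f) := by
  constructor
  · rintro ⟨f, hf⟩
    refine ⟨{u | ∃ a, f u = Sum.inr a}, Sum.elim id id ∘ f, ?_⟩
    intro u v h
    rcases h with ⟨hx, harc⟩ | ⟨hx, harc⟩
    · have := hf v u harc
      rcases hu : f u with a | a <;> rcases hv : f v with b | b <;>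
        simp_all [OGraph.antiTwin, Xor, Set.mem_setOf_eq]
    · have := hf u v harc
      rcases hu : f u with a | a <;> rcases hv : f v with b | b <;>
        simp_all [OGraph.antiTwin, Xor, Set.mem_setOf_eq]
  · rintro ⟨S, f, hf⟩
    classical
    refine ⟨fun u => if u ∈ S then Sum.inr (f u) else Sum.inl (f u), ?_⟩
    intro u v h
    by_cases hu : u ∈ S <;> by_cases hv : v ∈ S <;>
      simp only [hu, hv, if_pos, if_neg, not_false_iff] <;>
      simp only [OGraph.antiTwin]
    · exact hf u v (Or.inr ⟨by simp [Xor, hu, hv], h⟩)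
    · exact hf v u (Or.inl ⟨by simp [Xor, hu, hv], h⟩)
    · exact hf v u (Or.inl ⟨by simp [Xor, hu, hv], h⟩)
    · exact hf u v (Or.inr ⟨by simp [Xor, hu, hv], h⟩)
end
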